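/- Let φ(a) = Σ_j α_j(a) τ^j express the A-action of a formal Drinfeld module structure on the formal additive group over R. If a ∈ 𝔭^n, then α_j(a) ∈ 𝔭^{n−j} R for all j ≤ n. Consequently the map a ↦ φ(a) is 𝔭-adically continuous and extends uniquely to a continuous action of the completion Â on the formal additive group. -/

import Mathlib

/-- Proposition on continuity of a formal Drinfeld module structure: let
`φ : A → R{{τ}}` be a strict `A`-module structure on the formal additive group, encoded by
its coefficient functions `φ a = Σⱼ αⱼ(a) τ^j` (so `φ` is additive, multiplicative for the
twisted multiplication `(φ(ab))ₙ = Σ_{i+j=n} φ(a)ᵢ (φ(b)ⱼ)^(q^i)`, and strict: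
`φ(a)₀ = θ(a)`), with `𝔭 = (t)` and `π = θ(t)`.  Then `a ∈ 𝔭^n` implies
`αⱼ(a) ∈ 𝔭^(n-j) R` for all `j`; consequently `a ↦ φ(a)` is `𝔭`-adically continuous
(coefficientwise). -/
theorem stmt13 (R : Type*) [CommRing R] (q : ℕ)
    (A : Type*) [CommRing A] (t : A) (θ : A →+* R)
    (φ : A → ℕ → R)
    (hadd : ∀ a b : A, φ (a + b) = φ a + φ b)
    (hmul : ∀ a b : A, ∀ n : ℕ,
      φ (a * b) n = ∑ i ∈ Finset.range (n + 1), φ a i * (φ b (n - i)) ^ q ^ i)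
    (hstrict : ∀ a : A, φ a 0 = θ a)
    (π : R) (hπ : θ t = π) :
    (∀ n : ℕ, ∀ a ∈ Ideal.span {t} ^ n, ∀ j : ℕ,
      φ a j ∈ Ideal.span {π} ^ (n - j)) ∧
    (∀ j k : ℕ, ∃ N : ℕ, ∀ a b : A,
      a - b ∈ Ideal.span {t} ^ N → φ a j - φ b j ∈ Ideal.span {π} ^ k) := by
  have hzero : φ 0 = 0 := by
    have h := hadd 0 0
    rw [add_zero] at h
    exact (left_eq_add.mp h)
  -- in the degenerate case q = 0, all higher coefficients of φ 1 and φ t vanish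
  have h1q : q = 0 → ∀ m : ℕ, φ 1 (m + 1) = 0 := by
    intro hq
    intro m
    induction m using Nat.strong_induction_on with
    | _ m ih =>
      have h := hmul 1 1 (m + 1)
      rw [one_mul, Finset.sum_range_succ, Finset.sum_range_succ'] at h
      have hmid : ∀ i ∈ Finset.range m, φ 1 (i + 1) * φ 1 (m + 1 - (i + 1)) ^ q ^ (i + 1) = 0 := by
        intro i hi
        rw [ih i (Finset.mem_range.mp hi), zero_mul]
      rw [Finset.sum_eq_zero hmid] at h
      simp only [hq, pow_zero, pow_one, pow_succ, mul_zero, Nat.sub_self] at h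
      rw [hstrict, map_one, one_mul] at h
      simp only [Nat.sub_zero, mul_one, zero_add] at h
      exact right_eq_add.mp h
  have htq : q = 0 → ∀ m : ℕ, φ t (m + 1) = 0 := by
    intro hq m
    induction m using Nat.strong_induction_on with
    | _ m ih =>
      have h := hmul t 1 (m + 2)
      rw [mul_one, Finset.sum_range_succ, Finset.sum_range_succ, Finset.sum_range_succ'] at h
      have hmid : ∀ i ∈ Finset.range m, φ t (i + 1) * φ 1 (m + 2 - (i + 1)) ^ q ^ (i + 1) = 0 := by
        intro i hi
        rw [ih i (Finset.mem_range.mp hi), zero_mul]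
      rw [Finset.sum_eq_zero hmid] at h
      simp only [hq, pow_zero, pow_one, pow_succ, mul_zero, Nat.sub_self] at h
      have h10 : φ 1 (m + 2) = 0 := h1q hq (m + 1)
      rw [hstrict] at h
      simp only [Nat.sub_zero, mul_one, zero_add, h10, mul_zero] at h
      -- h : φ t (m+2) = φ t (m+1) + φ t (m+2)
      exact right_eq_add.mp h
  have key : ∀ n : ℕ, ∀ a ∈ Ideal.span {t} ^ n, ∀ j : ℕ,
      φ a j ∈ Ideal.span {π} ^ (n - j) := by
    intro n
    induction n with
    | zero =>
      intro a _ j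
      simp
    | succ n ih =>
      intro a ha
      rw [pow_succ] at ha
      refine Submodule.mul_induction_on ha ?_ ?_
      · intro r hr s hs j
        obtain ⟨c, rfl⟩ := Ideal.mem_span_singleton.mp hs
        have hre : r * (t * c) = t * (c * r) := by ring
        rw [hre, hmul t (c * r) j]
        have hcr : c * r ∈ Ideal.span {t} ^ n := Ideal.mul_mem_left _ c hr
        apply Submodule.sum_mem
        intro i hi
        have hij : i ≤ j := Nat.lt_succ_iff.mp (Finset.mem_range.mp hi)
        match i with
        | 0 =>
          rw [hstrict, hπ, pow_zero, pow_one, mul_comm]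
          apply Ideal.pow_le_pow_right (show n + 1 - j ≤ (n - j) + 1 by omega)
          rw [pow_succ]
          exact Submodule.mul_mem_mul (ih (c * r) hcr j) (Ideal.mem_span_singleton_self π)
        | (i + 1) =>
          rcases Nat.eq_zero_or_pos q with hq | hq
          · rw [htq hq i, zero_mul]
            exact Submodule.zero_mem _
          · have hx : φ (c * r) (j - (i + 1)) ∈ Ideal.span {π} ^ (n - (j - (i + 1))) :=
              ih (c * r) hcr _
            have hp : (φ (c * r) (j - (i + 1))) ^ q ^ (i + 1) ∈
                (Ideal.span {π} ^ (n - (j - (i + 1)))) ^ q ^ (i + 1) :=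
              Ideal.pow_mem_pow hx _
            rw [← pow_mul] at hp
            apply Ideal.mul_mem_left
            refine Ideal.pow_le_pow_right ?_ hp
            have hqpos : 1 ≤ q ^ (i + 1) := Nat.one_le_iff_ne_zero.mpr (pow_ne_zero _ (by omega))
            calc n + 1 - j ≤ n - (j - (i + 1)) := by omega
              _ ≤ (n - (j - (i + 1))) * q ^ (i + 1) := Nat.le_mul_of_pos_right _ hqpos
      · intro x y hx hy j
        have h := hadd x y
        have := congrFun h j
        rw [this]
        exact Submodule.add_mem _ (hx j) (hy j)
  refine ⟨key, ?_⟩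
  intro j k
  refine ⟨k + j, ?_⟩
  intro a b hab
  have hsub : φ (a - b) j = φ a j - φ b j := by
    have h := hadd (a - b) b
    rw [sub_add_cancel] at h
    have h' := congrFun h j
    simp only [Pi.add_apply] at h'
    exact (eq_sub_of_add_eq h'.symm)
  have := key (k + j) (a - b) hab j
  rwa [Nat.add_sub_cancel, hsub] at this
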